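/- Consider the infinite-population mean-field control problem with X = U = {0,1}, deterministic agent dynamics x_{t+1} = u_t (so T(·|x,u,μ) = δ_u), cost c(x,u,μ) = 0 if μ = (1/2)δ₀ + (1/2)δ₁ or μ = δ₀, and c(x,u,μ) = 10 otherwise, initial distribution μ₀ = (1/2)δ₀ + (1/2)δ₁, and discount β ∈ (0,1). Let γ₁(·|x) := (1/2)δ₀ + (1/2)δ₁ and γ₂(·|x) := δ₀, and define the mixed policy ĝ(μ) := (1/2)γ₁(·|x) + (1/2)γ₂(·|x) (each agent using γ₁ or γ₂ independently with probability 1/2). Then the discounted cost of ĝ is K_β(μ₀, ĝ) = 10β/(1−β) > 0, whereas K_β(μ₀, g₁) = K_β(μ₀, g₂) = 0 for the pure symmetric policies g₁, g₂ using γ₁, γ₂ respectively; hence the optimal performance fails without coordination on a common optimal policy. -/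

import Mathlib

open scoped BigOperators
open MeasureTheory Filter Topology

/-- Probability distributions on a finite set, as nonnegative functions summing to one. -/
abbrev PM (X : Type*) [Fintype X] : Type _ :=
  {p : X → ℝ // (∀ x, 0 ≤ p x) ∧ ∑ x, p x = 1}

/-- The distance `(1/2) Σ_x |f x - g x|` (total variation / W₁ for the discrete metric). -/
noncomputable def mdist {X : Type*} [Fintype X] (f g : X → ℝ) : ℝ :=
  (1 / 2) * ∑ x, |f x - g x|

/-- Stage cost `k(μ,γ) = Σ_{x,u} c(x,u,μ) γ(u|x) μ(x)`. -/
noncomputable def stageCost {X U : Type*} [Fintype X] [Fintype U]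
    (c : X → U → PM X → ℝ) (μ : PM X) (γ : X → PM U) : ℝ :=
  ∑ x, ∑ u, c x u μ * (γ x).1 u * μ.1 x

/-- Deterministic mean-field flow under a measure-feedback policy `g`. -/
noncomputable def flow {X U : Type*} [Fintype X] [Fintype U]
    (F : PM X → (X → PM U) → PM X) (g : PM X → X → PM U) (μ0 : PM X) : ℕ → PM X
  | 0 => μ0
  | t + 1 => F (flow F g μ0 t) (g (flow F g μ0 t))

/-- Discounted cost `K_β(μ₀, g)` of policy `g` in the infinite-population problem. -/
noncomputable def Kval {X U : Type*} [Fintype X] [Fintype U]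
    (c : X → U → PM X → ℝ) (F : PM X → (X → PM U) → PM X)
    (β : ℝ) (μ0 : PM X) (g : PM X → X → PM U) : ℝ :=
  ∑' t : ℕ, β ^ t * stageCost c (flow F g μ0 t) (g (flow F g μ0 t))

/-- Optimal value `K*_β(μ₀)` of the infinite-population problem. -/
noncomputable def Kopt {X U : Type*} [Fintype X] [Fintype U]
    (c : X → U → PM X → ℝ) (F : PM X → (X → PM U) → PM X)
    (β : ℝ) (μ0 : PM X) : ℝ :=
  ⨅ g : PM X → X → PM U, Kval c F β μ0 g

/-- The distribution `(1/2)δ₀ + (1/2)δ₁` on `{0,1}` (with `0 = false`, `1 = true`). -/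
noncomputable def pmHalf : PM Bool :=
  ⟨fun _ => 1 / 2, by
    refine ⟨fun x => by norm_num, ?_⟩
    norm_num [Fintype.sum_bool]⟩

/-- The point mass `δ₀` on `{0,1}`. -/
noncomputable def pmDelta0 : PM Bool :=
  ⟨fun y => if y = false then 1 else 0, by
    refine ⟨fun x => by simp only []; split <;> norm_num, ?_⟩
    norm_num [Fintype.sum_bool]⟩

/-- The mixture `(1/2)γ₁ + (1/2)γ₂ = (3/4)δ₀ + (1/4)δ₁`. -/
noncomputable def pmMixed : PM Bool :=
  ⟨fun y => if y = false then 3 / 4 else 1 / 4, by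
    refine ⟨fun x => by simp only []; split <;> norm_num, ?_⟩
    norm_num [Fintype.sum_bool]⟩

/-- Deterministic dynamics `x_{t+1} = u_t`: the kernel is `T(·|x,u,μ) = δ_u`. -/
noncomputable def exT : Bool → Bool → PM Bool → PM Bool :=
  fun _ u _ => ⟨fun y => if y = u then 1 else 0, by
    refine ⟨fun x => by simp only []; split <;> norm_num, ?_⟩
    cases u <;> norm_num [Fintype.sum_bool]⟩

open Classical in
/-- The cost: `0` if the mean-field term is `(1/2)δ₀+(1/2)δ₁` or `δ₀`, and `10` otherwise. -/
noncomputable def exC : Bool → Bool → PM Bool → ℝ :=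
  fun _ _ μ => if μ = pmHalf ∨ μ = pmDelta0 then 0 else 10

lemma pm_ne_of_false {p q : PM Bool} (h : p.1 false ≠ q.1 false) : p ≠ q := by
  intro he; exact h (by rw [he])

lemma stage_const (μ : PM Bool) (γ : Bool → PM Bool) :
    stageCost exC μ γ = if μ = pmHalf ∨ μ = pmDelta0 then 0 else 10 := by
  unfold stageCost exC
  split
  · simp
  · have h0 := (γ false).2.2
    have h1 := (γ true).2.2
    have hμ := μ.2.2
    simp only [Fintype.sum_bool] at h0 h1 hμ ⊢
    linear_combination 10 * μ.1 false * h0 + 10 * μ.1 true * h1 + 10 * hμ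

lemma F_const (F : PM Bool → (Bool → PM Bool) → PM Bool)
    (hF : ∀ (μ : PM Bool) (γ : Bool → PM Bool) (y : Bool),
      (F μ γ).1 y = ∑ x, ∑ u, (exT x u μ).1 y * (γ x).1 u * μ.1 x)
    (μ : PM Bool) (γ : PM Bool) : F μ (fun _ => γ) = γ := by
  apply Subtype.ext
  funext y
  rw [hF]
  have hμ := μ.2.2
  simp only [Fintype.sum_bool, exT] at hμ ⊢
  cases y <;> simp <;> linear_combination γ.1 _ * hμ

lemma flow_const (F : PM Bool → (Bool → PM Bool) → PM Bool)
    (hF : ∀ (μ : PM Bool) (γ : Bool → PM Bool) (y : Bool),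
      (F μ γ).1 y = ∑ x, ∑ u, (exT x u μ).1 y * (γ x).1 u * μ.1 x)
    (μ0 γ : PM Bool) (t : ℕ) :
    flow F (fun _ _ => γ) μ0 (t + 1) = γ := by
  show F _ _ = γ
  exact F_const F hF _ γ

/-- without coordination on a common optimal policy, the mixed policy incurs
cost `10β/(1−β) > 0`, while either pure symmetric optimal policy incurs cost `0`. -/
theorem stmt_19 (β : ℝ) (hβ0 : 0 < β) (hβ1 : β < 1)
    (F : PM Bool → (Bool → PM Bool) → PM Bool)
    (hF : ∀ (μ : PM Bool) (γ : Bool → PM Bool) (y : Bool),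
      (F μ γ).1 y = ∑ x, ∑ u, (exT x u μ).1 y * (γ x).1 u * μ.1 x) :
    Kval exC F β pmHalf (fun _ _ => pmMixed) = 10 * β / (1 - β) ∧
    0 < 10 * β / (1 - β) ∧
    Kval exC F β pmHalf (fun _ _ => pmHalf) = 0 ∧
    Kval exC F β pmHalf (fun _ _ => pmDelta0) = 0 := by
  have hβne : (1 : ℝ) - β ≠ 0 := by linarith
  have hmh : pmMixed ≠ pmHalf := pm_ne_of_false (by norm_num [pmMixed, pmHalf])
  have hmd : pmMixed ≠ pmDelta0 := pm_ne_of_false (by norm_num [pmMixed, pmDelta0])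
  have h1β : (0:ℝ) < 1 - β := by linarith
  have hpos : 0 < 10 * β / (1 - β) := by positivity
  refine ⟨?_, hpos, ?_, ?_⟩
  · -- mixed policy
    have hfl : ∀ t, flow F (fun _ _ => pmMixed) pmHalf t =
        if t = 0 then pmHalf else pmMixed := by
      intro t
      cases t with
      | zero => rfl
      | succ n => simp [flow_const F hF]
    have hf : ∀ t : ℕ, β ^ t * stageCost exC
        (flow F (fun _ _ => pmMixed) pmHalf t) ((fun _ _ => pmMixed) (flow F (fun _ _ => pmMixed) pmHalf t))
        = if t = 0 then 0 else 10 * β ^ t := by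
      intro t
      rw [hfl t]
      cases t with
      | zero => simp [stage_const]
      | succ n => simp [stage_const, hmh, hmd]; ring
    unfold Kval
    rw [tsum_congr hf]
    have hs : Summable (fun n : ℕ => (10 : ℝ) * β ^ n) :=
      (summable_geometric_of_lt_one hβ0.le hβ1).mul_left 10
    have hs2 : Summable (fun t : ℕ => if t = 0 then (0:ℝ) else 10 * β ^ t) := by
      apply hs.of_norm_bounded
      intro n
      rcases eq_or_ne n 0 with h | h
      · simp [h]
      · rw [if_neg h, Real.norm_of_nonneg (by positivity)]
    rw [Summable.tsum_eq_zero_add hs2]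
    simp only [if_pos rfl, ↓reduceIte, zero_add]
    have : (fun n : ℕ => if n + 1 = 0 then (0:ℝ) else 10 * β ^ (n + 1)) =
        fun n : ℕ => (10 * β) * β ^ n := by
      funext n; simp [pow_succ]; ring
    rw [this, tsum_mul_left, tsum_geometric_of_lt_one hβ0.le hβ1]
    field_simp
  · -- pmHalf policy
    have hfl : ∀ t, flow F (fun _ _ => pmHalf) pmHalf t = pmHalf := by
      intro t
      cases t with
      | zero => rfl
      | succ n => exact flow_const F hF _ _ _
    unfold Kval
    have : ∀ t : ℕ, β ^ t * stageCost exC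
        (flow F (fun _ _ => pmHalf) pmHalf t) ((fun _ _ => pmHalf) (flow F (fun _ _ => pmHalf) pmHalf t)) = 0 := by
      intro t; rw [hfl t]; simp [stage_const]
    rw [tsum_congr this]
    exact tsum_zero
  · -- pmDelta0 policy
    unfold Kval
    have : ∀ t : ℕ, β ^ t * stageCost exC
        (flow F (fun _ _ => pmDelta0) pmHalf t) ((fun _ _ => pmDelta0) (flow F (fun _ _ => pmDelta0) pmHalf t)) = 0 := by
      intro t
      cases t with
      | zero => simp [flow, stage_const]
      | succ n => rw [flow_const F hF]; simp [stage_const]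
    rw [tsum_congr this]
    exact tsum_zero
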